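/- arXiv:1906.08024 — 6 statements merged into one kernel-verified Lean document; each statement's English description precedes it below -/
import Mathlib

section
/- Fix α ≥ 1, G > 0, σ² > 0, and B > 0. The function ξ(p, χ) = −B·log₂(1 + G·p/(σ²·χ^α)) is quasiconvex on the convex domain {(p, χ) ∈ ℝ² : p ≥ 0, χ > 0}; in particular, for every r ∈ ℝ the set R = {(p, χ) : p ≥ 0, χ > 0, B·log₂(1 + G·p/(σ²·χ^α)) ≥ r} is convex. -/
open Real

lemma stmt_4_key (α G σ2 B : ℝ) (hα : 1 ≤ α) (hG : 0 < G) (hσ : 0 < σ2) (hB : 0 < B)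
    (r : ℝ) (p χ : ℝ) (hp : 0 ≤ p) (hχ : 0 < χ) :
    (r ≤ B * Real.logb 2 (1 + G * p / (σ2 * χ ^ α))) ↔
      (((2 : ℝ) ^ (r / B) - 1) * σ2 / G) * χ ^ α ≤ p := by
  have ht : 0 < σ2 * χ ^ α := mul_pos hσ (Real.rpow_pos_of_pos hχ α)
  have hpos : 0 < 1 + G * p / (σ2 * χ ^ α) := by positivity
  rw [show (r ≤ B * Real.logb 2 (1 + G * p / (σ2 * χ ^ α))) ↔
      r / B ≤ Real.logb 2 (1 + G * p / (σ2 * χ ^ α)) from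
      (div_le_iff₀' hB).symm,
    Real.le_logb_iff_rpow_le one_lt_two hpos]
  rw [show ((2:ℝ) ^ (r/B) ≤ 1 + G * p / (σ2 * χ ^ α)) ↔
      ((2:ℝ) ^ (r/B) - 1) ≤ G * p / (σ2 * χ ^ α) by constructor <;> intro <;> linarith,
    le_div_iff₀ ht]
  rw [div_mul_eq_mul_div, div_le_iff₀ hG]
  constructor <;> intro h <;> nlinarith

/-- The function `ξ(p, χ) = −B·log₂(1 + G·p/(σ²·χ^α))` is quasiconvex
on `{(p, χ) : p ≥ 0, χ > 0}`; in particular every set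
`R = {(p, χ) : p ≥ 0, χ > 0, B·log₂(1 + G·p/(σ²·χ^α)) ≥ r}` is convex. -/
theorem stmt_4 (α G σ2 B : ℝ) (hα : 1 ≤ α) (hG : 0 < G) (hσ : 0 < σ2) (hB : 0 < B) :
    QuasiconvexOn ℝ {x : ℝ × ℝ | 0 ≤ x.1 ∧ 0 < x.2}
      (fun x => -(B * Real.logb 2 (1 + G * x.1 / (σ2 * x.2 ^ α)))) ∧
    ∀ r : ℝ, Convex ℝ {x : ℝ × ℝ | 0 ≤ x.1 ∧ 0 < x.2 ∧
      r ≤ B * Real.logb 2 (1 + G * x.1 / (σ2 * x.2 ^ α))} := by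
  have key : ∀ r : ℝ, Convex ℝ {x : ℝ × ℝ | 0 ≤ x.1 ∧ 0 < x.2 ∧
      r ≤ B * Real.logb 2 (1 + G * x.1 / (σ2 * x.2 ^ α))} := by
    intro r
    set K := ((2 : ℝ) ^ (r / B) - 1) * σ2 / G with hK
    intro x hx y hy a b ha hb hab
    obtain ⟨hx1, hx2, hx3⟩ := hx
    obtain ⟨hy1, hy2, hy3⟩ := hy
    rw [Set.mem_setOf_eq] at *
    simp only [Prod.fst_add, Prod.snd_add, Prod.smul_fst, Prod.smul_snd, smul_eq_mul]
    have hx3' : K * x.2 ^ α ≤ x.1 := (stmt_4_key α G σ2 B hα hG hσ hB r x.1 x.2 hx1 hx2).1 hx3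
    have hy3' : K * y.2 ^ α ≤ y.1 := (stmt_4_key α G σ2 B hα hG hσ hB r y.1 y.2 hy1 hy2).1 hy3
    have hz2 : 0 < a * x.2 + b * y.2 := by
      rcases eq_or_lt_of_le ha with h | h
      · have : b = 1 := by linarith
        nlinarith
      · nlinarith [mul_nonneg hb hy2.le]
    have hz1 : 0 ≤ a * x.1 + b * y.1 := by positivity
    refine ⟨hz1, hz2, ?_⟩
    rw [stmt_4_key α G σ2 B hα hG hσ hB r _ _ hz1 hz2]
    rcases le_or_gt K 0 with hK0 | hK0
    · have : K * (a * x.2 + b * y.2) ^ α ≤ 0 :=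
        mul_nonpos_of_nonpos_of_nonneg hK0 (Real.rpow_nonneg hz2.le α)
      linarith
    · have hconv := (convexOn_rpow hα).2 (Set.mem_Ici.2 hx2.le) (Set.mem_Ici.2 hy2.le)
        ha hb hab
      simp only [smul_eq_mul] at hconv
      have h1 : (a * x.2 + b * y.2) ^ α ≤ a * x.2 ^ α + b * y.2 ^ α := hconv
      nlinarith [mul_nonneg (mul_nonneg ha hK0.le) (Real.rpow_nonneg hx2.le α),
        mul_nonneg (mul_nonneg hb hK0.le) (Real.rpow_nonneg hy2.le α)]
  refine ⟨?_, key⟩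
  intro c
  convert key (-c) using 1
  ext x
  simp only [Set.mem_sep_iff, Set.mem_setOf_eq, neg_le, and_assoc]
end

section
/- Let T > 0, σ² > 0, P_max > 0, and let η : [0,T] → (0, ∞) be continuous. Fix ζ ≥ 0 and define the water-filling power profile p*(t) = min{P_max, max{0, ζ − σ²/η(t)}} and the delivered data D = ∫₀ᵀ log(1 + η(t)·p*(t)/σ²) dt. Then for every measurable p : [0,T] → [0, P_max] satisfying ∫₀ᵀ log(1 + η(t)·p(t)/σ²) dt ≥ D, it holds that ∫₀ᵀ p*(t) dt ≤ ∫₀ᵀ p(t) dt. In other words, the water-filling profile minimizes total transmission energy among all power profiles delivering at least D nats of data. -/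
open MeasureTheory

/-- Pointwise KKT inequality: using `log x ≤ x - 1`, the log-rate difference is
bounded by the power difference over the water level `ζ`, given the key
polynomial inequality. -/
lemma aux_log_ineq (σ2 ζ e s q : ℝ) (hσ : 0 < σ2) (hζ : 0 < ζ) (he : 0 < e)
    (hs0 : 0 ≤ s) (hq0 : 0 ≤ q)
    (hkey : e * (q - s) * ζ ≤ (q - s) * (σ2 + e * s)) :
    Real.log (1 + e * q / σ2) - Real.log (1 + e * s / σ2) ≤ (q - s) / ζ := by
  have hA : 0 < σ2 + e * q := by positivity
  have hB : 0 < σ2 + e * s := by positivity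
  have eA : 1 + e * q / σ2 = (σ2 + e * q) / σ2 := by field_simp
  have eB : 1 + e * s / σ2 = (σ2 + e * s) / σ2 := by field_simp
  rw [eA, eB, Real.log_div hA.ne' hσ.ne', Real.log_div hB.ne' hσ.ne']
  have h := Real.log_le_sub_one_of_pos (div_pos hA hB)
  rw [Real.log_div hA.ne' hB.ne'] at h
  have h2 : (σ2 + e * q) / (σ2 + e * s) - 1 ≤ (q - s) / ζ := by
    rw [div_sub_one hB.ne', div_le_div_iff₀ hB hζ]
    nlinarith [hkey]
  linarith

/-- Over a known time-varying channel `η`, the water-filling profile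
`p*(t) = min{P_max, max{0, ζ − σ²/η(t)}}` minimizes total transmission energy among
all power profiles delivering at least as much data `D = ∫₀ᵀ log(1 + η p*/σ²)`. -/
theorem stmt_9 (T σ2 Pmax : ℝ) (hT : 0 < T) (hσ : 0 < σ2) (hP : 0 < Pmax)
    (η : ℝ → ℝ) (hη : ContinuousOn η (Set.Icc 0 T))
    (hηpos : ∀ t ∈ Set.Icc (0 : ℝ) T, 0 < η t)
    (ζ : ℝ) (hζ : 0 ≤ ζ)
    (pstar : ℝ → ℝ) (hpstar : ∀ t, pstar t = min Pmax (max 0 (ζ - σ2 / η t)))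
    (D : ℝ) (hD : D = ∫ t in (0:ℝ)..T, Real.log (1 + η t * pstar t / σ2))
    (p : ℝ → ℝ) (hmeas : Measurable p)
    (hbound : ∀ t, p t ∈ Set.Icc (0 : ℝ) Pmax)
    (hdata : D ≤ ∫ t in (0:ℝ)..T, Real.log (1 + η t * p t / σ2)) :
    (∫ t in (0:ℝ)..T, pstar t) ≤ ∫ t in (0:ℝ)..T, p t := by
  have hpe : pstar = fun t => min Pmax (max 0 (ζ - σ2 / η t)) := funext hpstar
  clear hpstar
  subst hpe hD
  have hμ : volume (Set.Ioc (0:ℝ) T) < ⊤ := measure_Ioc_lt_top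
  -- integrability of p
  have hIp : IntervalIntegrable p volume 0 T := by
    rw [intervalIntegrable_iff, Set.uIoc_of_le hT.le]
    refine Integrable.mono' (g := fun _ => Pmax)
      (integrableOn_const hμ.ne) hmeas.aestronglyMeasurable.restrict ?_
    refine ae_of_all _ fun t => ?_
    rw [Real.norm_eq_abs]
    exact abs_le.mpr ⟨by linarith [(hbound t).1], (hbound t).2⟩
  rcases eq_or_lt_of_le hζ with hζ0 | hζpos
  · -- ζ = 0 : the water-filling profile is identically 0 on [0,T]
    have hps : Set.EqOn (fun t => min Pmax (max 0 (ζ - σ2 / η t))) (fun _ => (0:ℝ))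
        (Set.uIcc (0:ℝ) T) := by
      intro t ht
      rw [Set.uIcc_of_le hT.le] at ht
      have hηt := hηpos t ht
      have h1 : ζ - σ2 / η t ≤ 0 := by
        have : 0 < σ2 / η t := div_pos hσ hηt
        linarith [hζ0.symm ▸ this]
      simp only [max_eq_left h1, min_eq_right hP.le]
    rw [intervalIntegral.integral_congr hps]
    simp only [intervalIntegral.integral_zero]
    exact intervalIntegral.integral_nonneg hT.le (fun t _ => (hbound t).1)
  · -- main case: ζ > 0
    -- continuity of pstar on [0,T]
    have hdiv : ContinuousOn (fun t => ζ - σ2 / η t) (Set.Icc 0 T) :=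
      continuousOn_const.sub (continuousOn_const.div hη (fun t ht => (hηpos t ht).ne'))
    have hmax_cont : ContinuousOn (fun t => max 0 (ζ - σ2 / η t)) (Set.Icc 0 T) :=
      (continuous_const.max continuous_id).comp_continuousOn hdiv
    have hps_cont : ContinuousOn (fun t => min Pmax (max 0 (ζ - σ2 / η t))) (Set.Icc 0 T) :=
      (continuous_const.min continuous_id).comp_continuousOn hmax_cont
    have hIps : IntervalIntegrable (fun t => min Pmax (max 0 (ζ - σ2 / η t))) volume 0 T := by
      apply ContinuousOn.intervalIntegrable
      rwa [Set.uIcc_of_le hT.le]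
    -- integrability of the water-filling log term (continuous)
    have hIlogs : IntervalIntegrable
        (fun t => Real.log (1 + η t * (min Pmax (max 0 (ζ - σ2 / η t))) / σ2)) volume 0 T := by
      apply ContinuousOn.intervalIntegrable
      rw [Set.uIcc_of_le hT.le]
      apply ContinuousOn.log
      · exact continuousOn_const.add ((hη.mul hps_cont).div_const σ2)
      · intro t ht
        have hs0' : 0 ≤ min Pmax (max 0 (ζ - σ2 / η t)) := le_min hP.le (le_max_left _ _)
        exact ne_of_gt (add_pos_of_pos_of_nonneg one_pos
          (div_nonneg (mul_nonneg (hηpos t ht).le hs0') hσ.le))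
    -- integrability of the log term for p (measurable + bounded)
    obtain ⟨C, hC⟩ := isCompact_Icc.exists_bound_of_continuousOn hη
    have hηaem : AEMeasurable η (volume.restrict (Set.Ioc 0 T)) :=
      (hη.aemeasurable measurableSet_Icc).mono_measure
        (Measure.restrict_mono Set.Ioc_subset_Icc_self le_rfl)
    have hIlogp : IntervalIntegrable (fun t => Real.log (1 + η t * p t / σ2)) volume 0 T := by
      rw [intervalIntegrable_iff, Set.uIoc_of_le hT.le]
      refine Integrable.mono' (g := fun _ => Real.log (1 + C * Pmax / σ2))
        (integrableOn_const hμ.ne)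
        ((Real.measurable_log.comp_aemeasurable
          (((hηaem.mul hmeas.aemeasurable).div_const σ2).const_add 1)).aestronglyMeasurable) ?_
      filter_upwards [ae_restrict_mem measurableSet_Ioc] with t ht
      have ht' : t ∈ Set.Icc 0 T := Set.Ioc_subset_Icc_self ht
      have he := hηpos t ht'
      have hCt : η t ≤ C := le_trans (le_abs_self _) (by simpa using hC t ht')
      obtain ⟨hq0, hqP⟩ := hbound t
      have h1 : (1:ℝ) ≤ 1 + η t * p t / σ2 :=
        le_add_of_nonneg_right (div_nonneg (mul_nonneg he.le hq0) hσ.le)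
      have h2 : 1 + η t * p t / σ2 ≤ 1 + C * Pmax / σ2 := by
        have hmm : η t * p t ≤ C * Pmax := mul_le_mul hCt hqP hq0 (le_trans he.le hCt)
        have := (div_le_div_iff_of_pos_right hσ).mpr hmm
        linarith
      rw [Real.norm_eq_abs, abs_of_nonneg (Real.log_nonneg h1)]
      exact Real.log_le_log (by linarith) h2
    -- pointwise KKT inequality
    have key : ∀ t ∈ Set.Icc (0:ℝ) T,
        Real.log (1 + η t * p t / σ2) - Real.log (1 + η t * (min Pmax (max 0 (ζ - σ2 / η t))) / σ2)
          ≤ (p t - min Pmax (max 0 (ζ - σ2 / η t))) / ζ := by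
      intro t ht
      have he := hηpos t ht
      obtain ⟨hq0, hqP⟩ := hbound t
      set s := min Pmax (max 0 (ζ - σ2 / η t)) with hs
      have hs0 : 0 ≤ s := le_min hP.le (le_max_left _ _)
      have hd : η t * (σ2 / η t) = σ2 := mul_div_cancel₀ σ2 he.ne'
      have hkey : η t * (p t - s) * ζ ≤ (p t - s) * (σ2 + η t * s) := by
        rcases le_or_gt (ζ - σ2 / η t) 0 with h1 | h1
        · have hsz : s = 0 := by rw [hs, max_eq_left h1, min_eq_right hP.le]
          have hζσ : ζ * η t ≤ σ2 := by
            have := (le_div_iff₀ he).mp (by linarith : ζ ≤ σ2 / η t)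
            linarith
          rw [hsz]
          nlinarith [mul_le_mul_of_nonneg_left hζσ hq0]
        · rcases le_or_gt (ζ - σ2 / η t) Pmax with h2 | h2
          · have hsz : s = ζ - σ2 / η t := by rw [hs, max_eq_right h1.le, min_eq_right h2]
            have hrw : σ2 + η t * (ζ - σ2 / η t) = η t * ζ := by
              rw [mul_sub, hd]; ring
            rw [hsz, hrw]
            exact le_of_eq (by ring)
          · have hsz : s = Pmax := by rw [hs, max_eq_right h1.le, min_eq_left h2.le]
            have h3 : σ2 + η t * Pmax ≤ η t * ζ := by
              have h4 := mul_le_mul_of_nonneg_left h2.le he.le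
              rw [mul_sub, hd] at h4
              linarith
            rw [hsz]
            nlinarith [mul_nonneg (sub_nonneg.mpr hqP) (sub_nonneg.mpr h3)]
      exact aux_log_ineq σ2 ζ (η t) s (p t) hσ hζpos he hs0 hq0 hkey
    -- integrate the pointwise inequality
    have hmono := intervalIntegral.integral_mono_on hT.le (hIlogp.sub hIlogs)
      ((hIp.sub hIps).div_const ζ) key
    rw [intervalIntegral.integral_sub hIlogp hIlogs, intervalIntegral.integral_div,
      intervalIntegral.integral_sub hIp hIps] at hmono
    have h0 : (0:ℝ) ≤ ((∫ t in (0:ℝ)..T, p t) - ∫ t in (0:ℝ)..T, min Pmax (max 0 (ζ - σ2 / η t))) / ζ := by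
      linarith
    have := mul_nonneg h0 hζpos.le
    rw [div_mul_cancel₀ _ hζpos.ne'] at this
    linarith
end

section
/- Let T > 0, 0 < V̲ < V̄, and Q_init < Q_final with V̲·T ≤ Q_final − Q_init ≤ V̄·T. Set t₁ = ((Q_final − Q_init) − V̄·T)/(V̲ − V̄), and define χ*(t) = Q_init + V̲·t for t ∈ [0, t₁] and χ*(t) = Q_init + V̲·t₁ + V̄·(t − t₁) for t ∈ [t₁, T]. Then for every integrable speed profile v : [0,T] → [V̲, V̄] with ∫₀ᵀ v(τ) dτ = Q_final − Q_init, the corresponding position χ(t) = Q_init + ∫₀ᵗ v(τ) dτ satisfies χ*(t) ≤ χ(t) for all t ∈ [0, T]; moreover χ*(T) = Q_final. -/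
open MeasureTheory

/-- The bang-bang trajectory (minimum speed until `t₁`, then maximum
speed) is pointwise closest to the receiver: every feasible trajectory `χ` satisfies
`χ*(t) ≤ χ(t)` on `[0, T]`, and `χ*(T) = Q_final`. -/
theorem stmt_10 (T Vlo Vhi Qinit Qfinal : ℝ) (hT : 0 < T) (hVlo : 0 < Vlo)
    (hV : Vlo < Vhi) (hQ : Qinit < Qfinal)
    (hfeas1 : Vlo * T ≤ Qfinal - Qinit) (hfeas2 : Qfinal - Qinit ≤ Vhi * T)
    (t₁ : ℝ) (ht₁ : t₁ = ((Qfinal - Qinit) - Vhi * T) / (Vlo - Vhi))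
    (χstar : ℝ → ℝ)
    (hχstar : ∀ t, χstar t =
      if t ≤ t₁ then Qinit + Vlo * t else Qinit + Vlo * t₁ + Vhi * (t - t₁))
    (v : ℝ → ℝ) (hint : IntervalIntegrable v volume 0 T)
    (hv : ∀ t ∈ Set.Icc (0 : ℝ) T, v t ∈ Set.Icc Vlo Vhi)
    (htot : (∫ τ in (0:ℝ)..T, v τ) = Qfinal - Qinit) :
    (∀ t ∈ Set.Icc (0 : ℝ) T, χstar t ≤ Qinit + ∫ τ in (0:ℝ)..t, v τ) ∧
      χstar T = Qfinal := by
  have hne : Vlo - Vhi ≠ 0 := by linarith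
  have key : (Vlo - Vhi) * t₁ = Qfinal - Qinit - Vhi * T := by
    rw [ht₁]; field_simp
  have ht₁T : t₁ ≤ T := by nlinarith
  have ht₁0 : 0 ≤ t₁ := by nlinarith
  -- integrability on subintervals
  have hsub : ∀ t ∈ Set.Icc (0:ℝ) T, IntervalIntegrable v volume 0 t := by
    intro t ht
    refine hint.mono_set ?_
    rw [Set.uIcc_of_le ht.1, Set.uIcc_of_le hT.le]
    exact Set.Icc_subset_Icc le_rfl ht.2
  have hsub2 : ∀ t ∈ Set.Icc (0:ℝ) T, IntervalIntegrable v volume t T := by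
    intro t ht
    refine hint.mono_set ?_
    rw [Set.uIcc_of_le ht.2, Set.uIcc_of_le hT.le]
    exact Set.Icc_subset_Icc ht.1 le_rfl
  have hlow : ∀ t ∈ Set.Icc (0:ℝ) T, Vlo * t ≤ ∫ τ in (0:ℝ)..t, v τ := by
    intro t ht
    have := intervalIntegral.integral_mono_on (μ := volume) ht.1
      (intervalIntegrable_const (c := Vlo)) (hsub t ht)
      (fun x hx => (hv x ⟨hx.1, hx.2.trans ht.2⟩).1)
    simpa [mul_comm] using this
  have hhigh : ∀ t ∈ Set.Icc (0:ℝ) T, (∫ τ in t..T, v τ) ≤ Vhi * (T - t) := by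
    intro t ht
    have := intervalIntegral.integral_mono_on (μ := volume) ht.2
      (hsub2 t ht) (intervalIntegrable_const (c := Vhi))
      (fun x hx => (hv x ⟨ht.1.trans hx.1, hx.2⟩).2)
    simpa [mul_comm] using this
  constructor
  · intro t ht
    rw [hχstar t]
    split_ifs with h
    · have := hlow t ht
      linarith
    · have hadd : (∫ τ in (0:ℝ)..t, v τ) + ∫ τ in t..T, v τ = Qfinal - Qinit := by
        rw [intervalIntegral.integral_add_adjacent_intervals (hsub t ht) (hsub2 t ht), htot]
      have := hhigh t ht
      nlinarith [key]
  · rw [hχstar T]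
    split_ifs with h
    · have : t₁ = T := le_antisymm ht₁T h
      subst this
      nlinarith [key]
    · nlinarith [key]
end

section
/- Let T > 0, 0 < V̲ < V̄, and Q_init < Q_final with V̲·T ≤ Q_final − Q_init ≤ V̄·T; set t₁ = ((Q_final − Q_init) − V̄·T)/(V̲ − V̄) and let χ*(t) be the bang-bang trajectory equal to Q_init + V̲·t on [0, t₁] and to Q_init + V̲·t₁ + V̄·(t − t₁) on [t₁, T]. Then for every continuous non-increasing function f : ℝ → ℝ and every integrable speed profile v : [0,T] → [V̲, V̄] with ∫₀ᵀ v(τ) dτ = Q_final − Q_init and position χ(t) = Q_init + ∫₀ᵗ v(τ) dτ, it holds that ∫₀ᵀ f(χ(t)) dt ≤ ∫₀ᵀ f(χ*(t)) dt. Thus the bang-bang speed profile (minimum speed then maximum speed) maximizes the total transferred data when the instantaneous rate f is a non-increasing function of the distance to the receiver. -/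
open MeasureTheory

/-- For any continuous non-increasing rate function `f` of the distance,
the bang-bang speed profile maximizes the transferred data
`∫₀ᵀ f(χ(t)) dt` among all feasible trajectories `χ`. -/
theorem stmt_11 (T Vlo Vhi Qinit Qfinal : ℝ) (hT : 0 < T) (hVlo : 0 < Vlo)
    (hV : Vlo < Vhi) (hQ : Qinit < Qfinal)
    (hfeas1 : Vlo * T ≤ Qfinal - Qinit) (hfeas2 : Qfinal - Qinit ≤ Vhi * T)
    (t₁ : ℝ) (ht₁ : t₁ = ((Qfinal - Qinit) - Vhi * T) / (Vlo - Vhi))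
    (χstar : ℝ → ℝ)
    (hχstar : ∀ t, χstar t =
      if t ≤ t₁ then Qinit + Vlo * t else Qinit + Vlo * t₁ + Vhi * (t - t₁))
    (f : ℝ → ℝ) (hf : Continuous f) (hanti : Antitone f)
    (v : ℝ → ℝ) (hint : IntervalIntegrable v volume 0 T)
    (hv : ∀ t ∈ Set.Icc (0 : ℝ) T, v t ∈ Set.Icc Vlo Vhi)
    (htot : (∫ τ in (0:ℝ)..T, v τ) = Qfinal - Qinit)
    (χ : ℝ → ℝ) (hχ : ∀ t, χ t = Qinit + ∫ τ in (0:ℝ)..t, v τ) :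
    (∫ t in (0:ℝ)..T, f (χ t)) ≤ ∫ t in (0:ℝ)..T, f (χstar t) := by
  have hden : Vlo - Vhi < 0 := by linarith
  have ht₁T : t₁ ≤ T := by
    rw [ht₁, div_le_iff_of_neg hden]; nlinarith
  -- χstar is continuous
  have hχstar_cont : Continuous χstar := by
    have : Continuous fun t : ℝ =>
        if t ≤ t₁ then Qinit + Vlo * t else Qinit + Vlo * t₁ + Vhi * (t - t₁) := by
      apply Continuous.if_le (by continuity) (by continuity) continuous_id continuous_const
      intro x hx; simp only [id] at hx; rw [hx]; ring
    exact this.congr fun t => (hχstar t).symm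
  -- χ is continuous on [0, T]
  have hprim : ContinuousOn (fun t => ∫ τ in (0:ℝ)..t, v τ) (Set.uIcc 0 T) :=
    intervalIntegral.continuousOn_primitive_interval' hint (by simp [hT.le])
  have hχ_cont : ContinuousOn χ (Set.uIcc 0 T) := by
    have : ContinuousOn (fun t => Qinit + ∫ τ in (0:ℝ)..t, v τ) (Set.uIcc 0 T) :=
      (continuousOn_const).add hprim
    exact this.congr fun t _ => hχ t
  -- pointwise: χstar t ≤ χ t on [0, T]
  have key : ∀ t ∈ Set.Icc (0:ℝ) T, χstar t ≤ χ t := by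
    intro t ht
    obtain ⟨ht0, htT⟩ := ht
    have hint_t : IntervalIntegrable v volume 0 t :=
      hint.mono_set (by
        rw [Set.uIcc_of_le ht0, Set.uIcc_of_le hT.le]
        exact Set.Icc_subset_Icc le_rfl htT)
    have hint_tT : IntervalIntegrable v volume t T :=
      hint.mono_set (by
        rw [Set.uIcc_of_le htT, Set.uIcc_of_le hT.le]
        exact Set.Icc_subset_Icc ht0 le_rfl)
    rw [hχstar t, hχ t]
    by_cases hle : t ≤ t₁
    · rw [if_pos hle]
      have hlow : Vlo * t ≤ ∫ τ in (0:ℝ)..t, v τ := by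
        have := intervalIntegral.integral_mono_on ht0
          (intervalIntegrable_const (c := Vlo)) hint_t
          (fun x hx => (hv x ⟨hx.1, hx.2.trans htT⟩).1)
        simpa [mul_comm] using this
      linarith
    · rw [if_neg hle]
      push_neg at hle
      have hsplit : (∫ τ in (0:ℝ)..t, v τ) + (∫ τ in t..T, v τ) = Qfinal - Qinit := by
        rw [intervalIntegral.integral_add_adjacent_intervals hint_t hint_tT, htot]
      have hhigh : (∫ τ in t..T, v τ) ≤ Vhi * (T - t) := by
        have := intervalIntegral.integral_mono_on htT hint_tT
          (intervalIntegrable_const (c := Vhi))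
          (fun x hx => (hv x ⟨ht0.trans hx.1, hx.2⟩).2)
        simpa [mul_comm] using this
      have hQf : Qinit + Vlo * t₁ + Vhi * (T - t₁) = Qfinal := by
        have hm : (Vlo - Vhi) * t₁ = Qfinal - Qinit - Vhi * T := by
          rw [ht₁, mul_div_cancel₀ _ (ne_of_lt hden)]
        linear_combination hm
      nlinarith [hsplit, hhigh]
  -- integrability of both integrands
  have hIccT : Set.uIcc (0:ℝ) T = Set.Icc 0 T := Set.uIcc_of_le hT.le
  have hi1 : IntervalIntegrable (fun t => f (χ t)) volume 0 T :=
    ContinuousOn.intervalIntegrable (hf.comp_continuousOn hχ_cont)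
  have hi2 : IntervalIntegrable (fun t => f (χstar t)) volume 0 T :=
    ContinuousOn.intervalIntegrable ((hf.comp hχstar_cont).continuousOn)
  exact intervalIntegral.integral_mono_on hT.le hi1 hi2
    (fun x hx => hanti (key x hx))
end

section
/- Fix B > 0, σ² > 0, channel gains a₁ > 0, a₂ > 0, and rates r₁ > 0, r₂ > 0, and let S = {(p₁, p₂) ∈ ℝ² : p₁ ≥ 0, p₂ ≥ 0, σ²·(2^{r₁/B} − 1) ≤ a₁·p₁, σ²·(2^{r₂/B} − 1) ≤ a₂·p₂, σ²·(2^{(r₁+r₂)/B} − 1) ≤ a₁·p₁ + a₂·p₂}. If (p₁, p₂) ∈ S minimizes p₁ + p₂ over S, then the sum-rate constraint holds with equality: a₁·p₁ + a₂·p₂ = σ²·(2^{(r₁+r₂)/B} − 1). -/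
set_option maxHeartbeats 800000


/-- In the two-user MAC power-minimization problem, any sum-power
minimizer over the feasible set `S` satisfies the sum-rate constraint with equality. -/
theorem stmt_13 (B σ2 a₁ a₂ r₁ r₂ : ℝ) (hB : 0 < B) (hσ : 0 < σ2)
    (ha₁ : 0 < a₁) (ha₂ : 0 < a₂) (hr₁ : 0 < r₁) (hr₂ : 0 < r₂)
    (S : Set (ℝ × ℝ))
    (hS : S = {q : ℝ × ℝ | 0 ≤ q.1 ∧ 0 ≤ q.2 ∧
      σ2 * ((2:ℝ) ^ (r₁ / B) - 1) ≤ a₁ * q.1 ∧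
      σ2 * ((2:ℝ) ^ (r₂ / B) - 1) ≤ a₂ * q.2 ∧
      σ2 * ((2:ℝ) ^ ((r₁ + r₂) / B) - 1) ≤ a₁ * q.1 + a₂ * q.2})
    (p : ℝ × ℝ) (hp : p ∈ S) (hopt : ∀ q ∈ S, p.1 + p.2 ≤ q.1 + q.2) :
    a₁ * p.1 + a₂ * p.2 = σ2 * ((2:ℝ) ^ ((r₁ + r₂) / B) - 1) := by
  subst hS
  obtain ⟨hp1, hp2, hc1, hc2, hc3⟩ := hp
  have hu : 0 < r₁ / B := div_pos hr₁ hB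
  have hv : 0 < r₂ / B := div_pos hr₂ hB
  have h2u : (1:ℝ) < 2 ^ (r₁ / B) :=
    Real.one_lt_rpow_iff_of_pos two_pos |>.mpr (Or.inl ⟨one_lt_two, hu⟩)
  have h2v : (1:ℝ) < 2 ^ (r₂ / B) :=
    Real.one_lt_rpow_iff_of_pos two_pos |>.mpr (Or.inl ⟨one_lt_two, hv⟩)
  have hsum : (2:ℝ) ^ ((r₁ + r₂) / B) = 2 ^ (r₁ / B) * 2 ^ (r₂ / B) := by
    rw [add_div]; exact Real.rpow_add two_pos _ _
  by_contra hne
  have hlt : σ2 * ((2:ℝ) ^ ((r₁ + r₂) / B) - 1) < a₁ * p.1 + a₂ * p.2 :=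
    lt_of_le_of_ne hc3 (fun h => hne h.symm)
  have hkey : σ2 * ((2:ℝ) ^ (r₁ / B) - 1) + σ2 * ((2:ℝ) ^ (r₂ / B) - 1)
      < σ2 * ((2:ℝ) ^ ((r₁ + r₂) / B) - 1) := by
    rw [hsum]
    nlinarith [mul_pos (sub_pos.mpr h2u) (sub_pos.mpr h2v)]
  rcases lt_or_ge (σ2 * ((2:ℝ) ^ (r₁ / B) - 1)) (a₁ * p.1) with h1 | h1
  · -- first individual constraint slack: decrease p.1
    set ε := min ((a₁ * p.1 - σ2 * ((2:ℝ) ^ (r₁ / B) - 1)) / a₁)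
        ((a₁ * p.1 + a₂ * p.2 - σ2 * ((2:ℝ) ^ ((r₁ + r₂) / B) - 1)) / a₁) with hεdef
    have hε : 0 < ε := lt_min (div_pos (by linarith) ha₁) (div_pos (by linarith) ha₁)
    have he1 : a₁ * ε ≤ a₁ * p.1 - σ2 * ((2:ℝ) ^ (r₁ / B) - 1) := by
      have := mul_le_mul_of_nonneg_left (min_le_left _ _ : ε ≤ _) ha₁.le
      rwa [mul_div_cancel₀ _ ha₁.ne'] at this
    have he2 : a₁ * ε ≤ a₁ * p.1 + a₂ * p.2 - σ2 * ((2:ℝ) ^ ((r₁ + r₂) / B) - 1) := by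
      have := mul_le_mul_of_nonneg_left (min_le_right _ _ : ε ≤ _) ha₁.le
      rwa [mul_div_cancel₀ _ ha₁.ne'] at this
    have hq : (p.1 - ε, p.2) ∈ {q : ℝ × ℝ | 0 ≤ q.1 ∧ 0 ≤ q.2 ∧
        σ2 * ((2:ℝ) ^ (r₁ / B) - 1) ≤ a₁ * q.1 ∧
        σ2 * ((2:ℝ) ^ (r₂ / B) - 1) ≤ a₂ * q.2 ∧
        σ2 * ((2:ℝ) ^ ((r₁ + r₂) / B) - 1) ≤ a₁ * q.1 + a₂ * q.2} := by
      simp only [Set.mem_setOf_eq]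
      refine ⟨by nlinarith [mul_pos hσ (sub_pos.mpr h2u)], hp2, by nlinarith, hc2, by nlinarith⟩
    have := hopt _ hq
    simp only at this
    linarith
  · -- first constraint tight; then second must be slack: decrease p.2
    have h2 : σ2 * ((2:ℝ) ^ (r₂ / B) - 1) < a₂ * p.2 := by linarith
    set ε := min ((a₂ * p.2 - σ2 * ((2:ℝ) ^ (r₂ / B) - 1)) / a₂)
        ((a₁ * p.1 + a₂ * p.2 - σ2 * ((2:ℝ) ^ ((r₁ + r₂) / B) - 1)) / a₂) with hεdef
    have hε : 0 < ε := lt_min (div_pos (by linarith) ha₂) (div_pos (by linarith) ha₂)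
    have he1 : a₂ * ε ≤ a₂ * p.2 - σ2 * ((2:ℝ) ^ (r₂ / B) - 1) := by
      have := mul_le_mul_of_nonneg_left (min_le_left _ _ : ε ≤ _) ha₂.le
      rwa [mul_div_cancel₀ _ ha₂.ne'] at this
    have he2 : a₂ * ε ≤ a₁ * p.1 + a₂ * p.2 - σ2 * ((2:ℝ) ^ ((r₁ + r₂) / B) - 1) := by
      have := mul_le_mul_of_nonneg_left (min_le_right _ _ : ε ≤ _) ha₂.le
      rwa [mul_div_cancel₀ _ ha₂.ne'] at this
    have hq : (p.1, p.2 - ε) ∈ {q : ℝ × ℝ | 0 ≤ q.1 ∧ 0 ≤ q.2 ∧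
        σ2 * ((2:ℝ) ^ (r₁ / B) - 1) ≤ a₁ * q.1 ∧
        σ2 * ((2:ℝ) ^ (r₂ / B) - 1) ≤ a₂ * q.2 ∧
        σ2 * ((2:ℝ) ^ ((r₁ + r₂) / B) - 1) ≤ a₁ * q.1 + a₂ * q.2} := by
      simp only [Set.mem_setOf_eq]
      refine ⟨hp1, by nlinarith [mul_pos hσ (sub_pos.mpr h2v)], hc1, by nlinarith, by nlinarith⟩
    have := hopt _ hq
    simp only at this
    linarith
end

section
/- Fix B > 0, σ² > 0, channel gains a₁, a₂ with 0 < a₁ ≤ a₂ (user 1 has the worse channel), and rates r₁ > 0, r₂ > 0, and let S = {(p₁, p₂) ∈ ℝ² : p₁ ≥ 0, p₂ ≥ 0, σ²·(2^{r₁/B} − 1) ≤ a₁·p₁, σ²·(2^{r₂/B} − 1) ≤ a₂·p₂, σ²·(2^{(r₁+r₂)/B} − 1) ≤ a₁·p₁ + a₂·p₂}. Define p₁* = σ²·(2^{r₁/B} − 1)/a₁ and p₂* = σ²·(2^{(r₁+r₂)/B} − 2^{r₁/B})/a₂. Then (p₁*, p₂*) ∈ S and p₁* + p₂* ≤ p₁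 + p₂ for every (p₁, p₂) ∈ S. That is, minimum sum power is achieved by decoding the better-channel user first (with interference) and the worse-channel user last at its interference-free single-user power. -/
/-- With `0 < a₁ ≤ a₂` (user 1 has the worse channel), the power pair
`p₁* = σ²(2^{r₁/B} − 1)/a₁`, `p₂* = σ²(2^{(r₁+r₂)/B} − 2^{r₁/B})/a₂` is feasible and
minimizes the sum power: decode the better-channel user first, the worse one last. -/
theorem stmt_14 (B σ2 a₁ a₂ r₁ r₂ : ℝ) (hB : 0 < B) (hσ : 0 < σ2)
    (ha₁ : 0 < a₁) (ha : a₁ ≤ a₂) (hr₁ : 0 < r₁) (hr₂ : 0 < r₂)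
    (S : Set (ℝ × ℝ))
    (hS : S = {q : ℝ × ℝ | 0 ≤ q.1 ∧ 0 ≤ q.2 ∧
      σ2 * ((2:ℝ) ^ (r₁ / B) - 1) ≤ a₁ * q.1 ∧
      σ2 * ((2:ℝ) ^ (r₂ / B) - 1) ≤ a₂ * q.2 ∧
      σ2 * ((2:ℝ) ^ ((r₁ + r₂) / B) - 1) ≤ a₁ * q.1 + a₂ * q.2})
    (p₁star p₂star : ℝ)
    (hp₁ : p₁star = σ2 * ((2:ℝ) ^ (r₁ / B) - 1) / a₁)
    (hp₂ : p₂star = σ2 * ((2:ℝ) ^ ((r₁ + r₂) / B) - (2:ℝ) ^ (r₁ / B)) / a₂) :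
    (p₁star, p₂star) ∈ S ∧ ∀ q ∈ S, p₁star + p₂star ≤ q.1 + q.2 := by
  have ha₂ : 0 < a₂ := ha₁.trans_le ha
  set x := (2:ℝ) ^ (r₁ / B) with hxdef
  set y := (2:ℝ) ^ (r₂ / B) with hydef
  have hz : (2:ℝ) ^ ((r₁ + r₂) / B) = x * y := by
    rw [add_div, Real.rpow_add two_pos]
  have hx : 1 < x := Real.one_lt_rpow_iff_of_pos two_pos |>.2 (Or.inl ⟨one_lt_two, div_pos hr₁ hB⟩)
  have hy : 1 < y := Real.one_lt_rpow_iff_of_pos two_pos |>.2 (Or.inl ⟨one_lt_two, div_pos hr₂ hB⟩)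
  have h1 : a₁ * p₁star = σ2 * (x - 1) := by rw [hp₁]; field_simp
  have h2 : a₂ * p₂star = σ2 * (x * y - x) := by rw [hp₂, hz]; field_simp
  have hp1nn : 0 ≤ p₁star := by nlinarith
  have hp2nn : 0 ≤ p₂star := by nlinarith [mul_pos hσ (mul_pos (by linarith : (0:ℝ) < x) (by linarith : (0:ℝ) < y - 1))]
  constructor
  · rw [hS]
    refine ⟨hp1nn, hp2nn, le_of_eq h1.symm, ?_, ?_⟩
    · rw [h2]; nlinarith [mul_nonneg (mul_nonneg hσ.le (by linarith : (0:ℝ) ≤ x - 1)) (by linarith : (0:ℝ) ≤ y - 1)]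
    · rw [hz]; nlinarith
  · intro q hq
    rw [hS] at hq
    obtain ⟨hq1, hq2, hc1, hc2, hc3⟩ := hq
    rw [hz] at hc3
    have hq1ge : p₁star ≤ q.1 := by
      have := hc1
      nlinarith
    nlinarith [mul_le_mul_of_nonneg_left hq1ge (by linarith : (0:ℝ) ≤ a₂ - a₁)]
end
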